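/- Odd maximal alternating paths: in the setting of the previous lemma (G = (B,S,E) bipartite; node weights W(i) = b_i, W(j) = −s_j and W₁(i) = φ_i with φ_i ≤ b_i, W₁(j) = −s_j; M the unique maximum node-based-weight matching w.r.t. W; M₁ the unique maximum node-based-weight matching w.r.t. W₁; and for every vertex v the maximum-weight matching w.r.t. W among matchings leaving v uncovered is unique), let A = (i₁, j₁, i₂, j₂, …, i_L, j_L) with L ≥ 2 be a maximal alternating path of M ∪ M₁ with an odd number of edges, where each i_l is a buyer, each j_l is a seller, (i_l, j_l) ∈ M for l = 1, …, L, and (j_l, i_{l+1}) ∈ M₁ for l = 1, …, L−1. Then: (1) if b_{i_L} > b_{i_1}, then i_L is covered by the maximum-weight (w.r.t. W) matching among matchings leaving j_L uncovered; and (2) if b_{i_L} ≤ b_{i_1}, then Σ_{l=1}^{L−1}(b_{i_l} − s_{j_l}) ≥ Σ_{l=1}^{L−1}(b_{i_{l+1}} − s_{j_l}). -/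

import Mathlib

/-- A matching of the bipartite graph with vertex sides `B`, `S` and edge relation `E`:
a finite set of edges (pairs) that are pairwise vertex-disjoint. -/
def IsBipMatching {B S : Type*} (E : B → S → Prop) (M : Finset (B × S)) : Prop :=
  (∀ p ∈ M, E p.1 p.2) ∧
  (∀ p ∈ M, ∀ q ∈ M, p.1 = q.1 → p = q) ∧
  (∀ p ∈ M, ∀ q ∈ M, p.2 = q.2 → p = q)

/-- The node-based weight of a matching for a node weight function `W` on `B ⊕ S`:
`∑_{(i,j) ∈ M} (W i + W j)`, i.e. the sum of `W` over all covered vertices. -/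
noncomputable def bipNodeWeight {B S : Type*} (W : B ⊕ S → ℝ) (M : Finset (B × S)) : ℝ :=
  ∑ p ∈ M, (W (Sum.inl p.1) + W (Sum.inr p.2))

/-- **Odd maximal alternating paths.** With node weights `W i = b i`, `W j = -s j` and
`W₁ i = φ i` (where `φ i ≤ b i`), `W₁ j = -s j`, let `M` be the unique maximum
node-based-weight matching w.r.t. `W`, `M₁` the unique maximum node-based-weight matching
w.r.t. `W₁`, and for every buyer `i` (resp. seller `j`) let `MminusB i` (resp. `MminusS j`) be
the unique maximum-weight (w.r.t. `W`) matching among matchings leaving that vertex uncovered.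
Let `A = (i₁, j₁, i₂, j₂, ..., i_L, j_L)` (here 0-indexed: `iv 0, jv 0, ..., iv (L-1),
jv (L-1)`) with `L ≥ 2` be a maximal alternating path of `M ∪ M₁` with an odd number of edges,
where `(i_l, j_l) ∈ M` and `(i_{l+1}, j_l) ∈ M₁`. Then: (1) if `b i_L > b i₁` then `i_L` is
covered by `MminusS j_L`; and (2) if `b i_L ≤ b i₁` then
`∑_{l=1}^{L-1} (b i_l - s j_l) ≥ ∑_{l=1}^{L-1} (b i_{l+1} - s j_l)`. -/
theorem odd_maximal_alternating_path
    {B S : Type*} [Fintype B] [Fintype S] [DecidableEq B] [DecidableEq S]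
    (E : B → S → Prop) (b : B → ℝ) (s : S → ℝ) (φ : B → ℝ)
    (hφ : ∀ i, φ i ≤ b i)
    (M M₁ : Finset (B × S))
    (hM : IsBipMatching E M) (hM₁ : IsBipMatching E M₁)
    (hMmax : ∀ N, IsBipMatching E N →
      bipNodeWeight (Sum.elim b fun j => -s j) N ≤ bipNodeWeight (Sum.elim b fun j => -s j) M)
    (hMuniq : ∀ N, IsBipMatching E N →
      bipNodeWeight (Sum.elim b fun j => -s j) N = bipNodeWeight (Sum.elim b fun j => -s j) M →
      N = M)
    (hM₁max : ∀ N, IsBipMatching E N →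
      bipNodeWeight (Sum.elim φ fun j => -s j) N ≤ bipNodeWeight (Sum.elim φ fun j => -s j) M₁)
    (hM₁uniq : ∀ N, IsBipMatching E N →
      bipNodeWeight (Sum.elim φ fun j => -s j) N = bipNodeWeight (Sum.elim φ fun j => -s j) M₁ →
      N = M₁)
    (MminusB : B → Finset (B × S))
    (hMmB : ∀ i, IsBipMatching E (MminusB i))
    (hMmBfree : ∀ i, ∀ p ∈ MminusB i, p.1 ≠ i)
    (hMmBmax : ∀ i, ∀ N, IsBipMatching E N → (∀ p ∈ N, p.1 ≠ i) →
      bipNodeWeight (Sum.elim b fun j => -s j) N ≤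
        bipNodeWeight (Sum.elim b fun j => -s j) (MminusB i))
    (hMmBuniq : ∀ i, ∀ N, IsBipMatching E N → (∀ p ∈ N, p.1 ≠ i) →
      bipNodeWeight (Sum.elim b fun j => -s j) N =
        bipNodeWeight (Sum.elim b fun j => -s j) (MminusB i) → N = MminusB i)
    (MminusS : S → Finset (B × S))
    (hMmS : ∀ j, IsBipMatching E (MminusS j))
    (hMmSfree : ∀ j, ∀ p ∈ MminusS j, p.2 ≠ j)
    (hMmSmax : ∀ j, ∀ N, IsBipMatching E N → (∀ p ∈ N, p.2 ≠ j) →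
      bipNodeWeight (Sum.elim b fun j' => -s j') N ≤
        bipNodeWeight (Sum.elim b fun j' => -s j') (MminusS j))
    (hMmSuniq : ∀ j, ∀ N, IsBipMatching E N → (∀ p ∈ N, p.2 ≠ j) →
      bipNodeWeight (Sum.elim b fun j' => -s j') N =
        bipNodeWeight (Sum.elim b fun j' => -s j') (MminusS j) → N = MminusS j)
    (L : ℕ) (hL : 2 ≤ L) (iv : ℕ → B) (jv : ℕ → S)
    (hivinj : ∀ l l', l < L → l' < L → iv l = iv l' → l = l')
    (hjvinj : ∀ l l', l < L → l' < L → jv l = jv l' → l = l')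
    (hMedge : ∀ l < L, (iv l, jv l) ∈ M)
    (hM₁edge : ∀ l, l + 1 < L → (iv (l + 1), jv l) ∈ M₁)
    (hmaxfirst : ∀ p, (p ∈ M ∨ p ∈ M₁) → p.1 = iv 0 → p.2 = jv 0)
    (hmaxlast : ∀ p, (p ∈ M ∨ p ∈ M₁) → p.2 = jv (L - 1) → p.1 = iv (L - 1)) :
    (b (iv 0) < b (iv (L - 1)) → ∃ p ∈ MminusS (jv (L - 1)), p.1 = iv (L - 1)) ∧
    (b (iv (L - 1)) ≤ b (iv 0) →
      ∑ l ∈ Finset.range (L - 1), (b (iv l) - s (jv l)) ≥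
        ∑ l ∈ Finset.range (L - 1), (b (iv (l + 1)) - s (jv l))) := by

  classical
  set W : B ⊕ S → ℝ := Sum.elim b fun j => -s j with hWdef
  obtain ⟨K, rfl⟩ : ∃ K, L = K + 1 := ⟨L - 1, by omega⟩
  have hK : 1 ≤ K := by omega
  simp only [Nat.add_sub_cancel]
  constructor
  · -- Part (1)
    intro hb
    by_contra hcon
    push_neg at hcon
    -- hcon : ∀ p ∈ MminusS (jv K), p.1 ≠ iv K
    set N := MminusS (jv K) with hNdef
    have hNmatch := hMmS (jv K)
    have hNfree := hMmSfree (jv K)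
    -- N₂ = N plus the edge (iv K, jv K)
    have hnotmem : (iv K, jv K) ∉ N := fun h => hNfree _ h rfl
    set N₂ : Finset (B × S) := insert (iv K, jv K) N with hN₂def
    have hN₂match : IsBipMatching E N₂ := by
      refine ⟨?_, ?_, ?_⟩
      · intro p hp
        rcases Finset.mem_insert.1 hp with h | h
        · subst h; exact hM.1 _ (hMedge K (by omega))
        · exact hNmatch.1 _ h
      · intro p hp q hq hpq
        rcases Finset.mem_insert.1 hp with h | h <;>
          rcases Finset.mem_insert.1 hq with h' | h'
        · rw [h, h']
        · exact absurd (by rw [← hpq, h]) (hcon q h')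
        · exact absurd (by rw [hpq, h']) (hcon p h)
        · exact hNmatch.2.1 p h q h' hpq
      · intro p hp q hq hpq
        rcases Finset.mem_insert.1 hp with h | h <;>
          rcases Finset.mem_insert.1 hq with h' | h'
        · rw [h, h']
        · exact absurd (by rw [← hpq, h]) (hNfree q h')
        · exact absurd (by rw [hpq, h']) (hNfree p h)
        · exact hNmatch.2.2 p h q h' hpq
    have hN₂w : bipNodeWeight W N₂ = bipNodeWeight W N + (b (iv K) - s (jv K)) := by
      rw [hN₂def, bipNodeWeight, Finset.sum_insert hnotmem]
      simp only [hWdef, Sum.elim_inl, Sum.elim_inr, bipNodeWeight]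
      ring
    have hle1 : bipNodeWeight W N₂ ≤ bipNodeWeight W M := hMmax N₂ hN₂match
    -- the swapped matching N'
    set P : Finset (B × S) := (Finset.range (K + 1)).image fun l => (iv l, jv l) with hPdef
    set Q : Finset (B × S) := (Finset.range K).image fun l => (iv (l + 1), jv l) with hQdef
    have hPmem : ∀ p, p ∈ P ↔ ∃ l, l < K + 1 ∧ (iv l, jv l) = p := by
      intro p
      simp [hPdef, Finset.mem_image]
    have hQmem : ∀ p, p ∈ Q ↔ ∃ l, l < K ∧ (iv (l + 1), jv l) = p := by
      intro p
      simp [hQdef, Finset.mem_image]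
    have hPsub : P ⊆ M := by
      intro p hp
      obtain ⟨l, hl, rfl⟩ := (hPmem p).1 hp
      exact hMedge l hl
    have hQM : ∀ p ∈ Q, p ∉ M := by
      intro p hp hpM
      obtain ⟨l, hl, rfl⟩ := (hQmem p).1 hp
      have h1 : (iv l, jv l) ∈ M := hMedge l (by omega)
      have := hM.2.2 _ hpM _ h1 rfl
      have : iv (l + 1) = iv l := congrArg Prod.fst this
      have := hivinj _ _ (by omega) (by omega) this
      omega
    set N' : Finset (B × S) := (M \ P) ∪ Q with hN'def
    have hdisj : Disjoint (M \ P) Q := by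
      rw [Finset.disjoint_right]
      intro p hp hpM
      exact hQM p hp (Finset.mem_sdiff.1 hpM).1
    have hN'match : IsBipMatching E N' := by
      refine ⟨?_, ?_, ?_⟩
      · intro p hp
        rcases Finset.mem_union.1 hp with h | h
        · exact hM.1 _ (Finset.mem_sdiff.1 h).1
        · obtain ⟨l, hl, rfl⟩ := (hQmem p).1 h
          exact hM₁.1 _ (hM₁edge l (by omega))
      · intro p hp q hq hpq
        rcases Finset.mem_union.1 hp with h | h <;>
          rcases Finset.mem_union.1 hq with h' | h'
        · exact hM.2.1 p (Finset.mem_sdiff.1 h).1 q (Finset.mem_sdiff.1 h').1 hpq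
        · -- p ∈ M \ P, q ∈ Q
          obtain ⟨l, hl, rfl⟩ := (hQmem q).1 h'
          exfalso
          have h1 : (iv (l + 1), jv (l + 1)) ∈ M := hMedge (l + 1) (by omega)
          have h2 : p = (iv (l + 1), jv (l + 1)) :=
            hM.2.1 p (Finset.mem_sdiff.1 h).1 _ h1 hpq
          exact (Finset.mem_sdiff.1 h).2 (h2 ▸ (hPmem _).2 ⟨l + 1, by omega, rfl⟩)
        · obtain ⟨l, hl, rfl⟩ := (hQmem p).1 h
          exfalso
          have h1 : (iv (l + 1), jv (l + 1)) ∈ M := hMedge (l + 1) (by omega)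
          have h2 : q = (iv (l + 1), jv (l + 1)) :=
            hM.2.1 q (Finset.mem_sdiff.1 h').1 _ h1 hpq.symm
          exact (Finset.mem_sdiff.1 h').2 (h2 ▸ (hPmem _).2 ⟨l + 1, by omega, rfl⟩)
        · obtain ⟨l, hl, hlp⟩ := (hQmem p).1 h
          obtain ⟨l', hl', hlq⟩ := (hQmem q).1 h'
          exact hM₁.2.1 p (hlp ▸ hM₁edge l (by omega)) q (hlq ▸ hM₁edge l' (by omega)) hpq
      · intro p hp q hq hpq
        rcases Finset.mem_union.1 hp with h | h <;>
          rcases Finset.mem_union.1 hq with h' | h'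
        · exact hM.2.2 p (Finset.mem_sdiff.1 h).1 q (Finset.mem_sdiff.1 h').1 hpq
        · obtain ⟨l, hl, rfl⟩ := (hQmem q).1 h'
          exfalso
          have h1 : (iv l, jv l) ∈ M := hMedge l (by omega)
          have h2 : p = (iv l, jv l) :=
            hM.2.2 p (Finset.mem_sdiff.1 h).1 _ h1 hpq
          exact (Finset.mem_sdiff.1 h).2 (h2 ▸ (hPmem _).2 ⟨l, by omega, rfl⟩)
        · obtain ⟨l, hl, rfl⟩ := (hQmem p).1 h
          exfalso
          have h1 : (iv l, jv l) ∈ M := hMedge l (by omega)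
          have h2 : q = (iv l, jv l) :=
            hM.2.2 q (Finset.mem_sdiff.1 h').1 _ h1 hpq.symm
          exact (Finset.mem_sdiff.1 h').2 (h2 ▸ (hPmem _).2 ⟨l, by omega, rfl⟩)
        · obtain ⟨l, hl, hlp⟩ := (hQmem p).1 h
          obtain ⟨l', hl', hlq⟩ := (hQmem q).1 h'
          exact hM₁.2.2 p (hlp ▸ hM₁edge l (by omega)) q (hlq ▸ hM₁edge l' (by omega)) hpq
    have hN'free : ∀ p ∈ N', p.2 ≠ jv K := by
      intro p hp hpK
      rcases Finset.mem_union.1 hp with h | h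
      · have h1 : (iv K, jv K) ∈ M := hMedge K (by omega)
        have h2 : p = (iv K, jv K) :=
          hM.2.2 p (Finset.mem_sdiff.1 h).1 _ h1 hpK
        exact (Finset.mem_sdiff.1 h).2 (h2 ▸ (hPmem _).2 ⟨K, by omega, rfl⟩)
      · obtain ⟨l, hl, rfl⟩ := (hQmem p).1 h
        have := hjvinj l K (by omega) (by omega) hpK
        omega
    -- weight of N'
    have hinjP : ∀ l ∈ Finset.range (K + 1), ∀ l' ∈ Finset.range (K + 1),
        (iv l, jv l) = (iv l', jv l') → l = l' := by
      intro l hl l' hl' h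
      exact hjvinj l l' (Finset.mem_range.1 hl) (Finset.mem_range.1 hl')
        (congrArg Prod.snd h)
    have hinjQ : ∀ l ∈ Finset.range K, ∀ l' ∈ Finset.range K,
        (iv (l + 1), jv l) = (iv (l' + 1), jv l') → l = l' := by
      intro l hl l' hl' h
      have hl1 := Finset.mem_range.1 hl
      have hl2 := Finset.mem_range.1 hl'
      exact hjvinj l l' (by omega) (by omega) (congrArg Prod.snd h)
    have hsumP : bipNodeWeight W P = ∑ l ∈ Finset.range (K + 1), (b (iv l) - s (jv l)) := by
      rw [bipNodeWeight, hPdef, Finset.sum_image hinjP]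
      simp [hWdef, sub_eq_add_neg]
    have hsumQ : bipNodeWeight W Q = ∑ l ∈ Finset.range K, (b (iv (l + 1)) - s (jv l)) := by
      rw [bipNodeWeight, hQdef, Finset.sum_image hinjQ]
      simp [hWdef, sub_eq_add_neg]
    have hN'w : bipNodeWeight W N' = bipNodeWeight W M - bipNodeWeight W P
        + bipNodeWeight W Q := by
      rw [hN'def, bipNodeWeight, Finset.sum_union hdisj, Finset.sum_sdiff_eq_sub hPsub]
      rfl
    have htelb : ∑ l ∈ Finset.range (K + 1), b (iv l)
        = b (iv 0) + ∑ l ∈ Finset.range K, b (iv (l + 1)) := by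
      rw [Finset.sum_range_succ' (fun l => b (iv l)) K]; ring
    have htels : ∑ l ∈ Finset.range (K + 1), s (jv l)
        = ∑ l ∈ Finset.range K, s (jv l) + s (jv K) :=
      Finset.sum_range_succ (fun l => s (jv l)) K
    have hPQ : bipNodeWeight W P - bipNodeWeight W Q = b (iv 0) - s (jv K) := by
      rw [hsumP, hsumQ, Finset.sum_sub_distrib, Finset.sum_sub_distrib, htelb, htels]
      ring
    have hle2 : bipNodeWeight W N' ≤ bipNodeWeight W N :=
      hMmSmax (jv K) N' hN'match hN'free
    linarith [hle1, hle2, hN₂w, hN'w, hPQ]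
  · -- Part (2)
    intro hb
    have h1 : ∑ l ∈ Finset.range K, (b (iv l) - s (jv l))
        - ∑ l ∈ Finset.range K, (b (iv (l + 1)) - s (jv l))
        = b (iv 0) - b (iv K) := by
      rw [← Finset.sum_sub_distrib]
      have : ∀ l, (b (iv l) - s (jv l)) - (b (iv (l + 1)) - s (jv l))
          = b (iv l) - b (iv (l + 1)) := fun l => by ring
      simp only [this]
      exact Finset.sum_range_sub' (fun l => b (iv l)) K
    linarith [h1]
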